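/- Let X and Y be bullseye spaces and r ≥ 2, n₀, x₀, y₀ ∈ ℕ with x(n) = x₀ and y(n) = y₀ r^n for all n ≥ n₀. Then for every α > 0 there is no surjective α-morphism β : X → Y. -/

import Mathlib

lemma lin_lt_pow (c : ℕ) : ∀ m, 3 * c + 3 ≤ m → c * (m + 1) < 2 ^ m := by
  intro m hm
  induction m, hm using Nat.le_induction with
  | base =>
    have hc : c < 2 ^ c := Nat.lt_two_pow_self (n := c)
    have h1 : c + 2 ≤ 2 ^ (c + 1) := by
      have : 2 ^ (c + 1) = 2 * 2 ^ c := by ring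
      omega
    have h2 : (c + 2) ^ 3 ≤ (2 ^ (c + 1)) ^ 3 := Nat.pow_le_pow_left h1 3
    have h3 : (2 ^ (c + 1)) ^ 3 = 2 ^ (3 * c + 3) := by
      rw [← pow_mul]; ring_nf
    have hexp : (c + 2) ^ 3 = c^3 + 6*c^2 + 12*c + 8 := by ring
    have h4 : c * (3 * c + 3 + 1) < (c + 2) ^ 3 := by
      nlinarith [Nat.zero_le (c^3), Nat.zero_le (c^2), hexp]
    omega
  | succ m hm ih =>
    have hc : c ≤ 2 ^ m := le_trans (by omega) (Nat.lt_two_pow_self (n := m)).le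
    have : 2 ^ (m + 1) = 2 * 2 ^ m := by ring
    have : c * (m + 1 + 1) = c * (m + 1) + c := by ring
    omega


/-- `β` is an `α`-morphism of bullseye spaces: it fixes the distinguished point
`∗` (= `none`), and there is `k ∈ ℝ` such that whenever a point of the ring `X_N`
is sent to a point of the ring `Y_M`, one has `M ≥ αN + k`. -/
def IsAlphaMorphism (X Y : ℕ → Type*) (α : ℝ)
    (β : Option (Σ n, X n) → Option (Σ n, Y n)) : Prop :=
  β none = none ∧ ∃ k : ℝ, ∀ (N : ℕ) (x : X N) (M : ℕ) (y : Y M),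
    β (some ⟨N, x⟩) = some ⟨M, y⟩ → α * N + k ≤ M

/-- if `x(n) = x₀` and `y(n) = y₀ rⁿ` for all `n ≥ n₀` with `r ≥ 2`,
then for every `α > 0` there is no surjective `α`-morphism `β : X → Y`. -/
theorem stmt14 (X Y : ℕ → Type*) [∀ n, Fintype (X n)] [∀ n, Fintype (Y n)]
    (n₀ x₀ y₀ r : ℕ) (hn₀ : 0 < n₀) (hx₀ : 0 < x₀) (hy₀ : 0 < y₀) (hr : 2 ≤ r)
    (hx : ∀ n ≥ n₀, Fintype.card (X n) = x₀)
    (hy : ∀ n ≥ n₀, Fintype.card (Y n) = y₀ * r ^ n) :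
    ∀ α : ℝ, 0 < α →
      ¬ ∃ β : Option (Σ n, X n) → Option (Σ n, Y n),
          Function.Surjective β ∧ IsAlphaMorphism X Y α β := by
  intro α hα
  rintro ⟨β, hsurj, hβ0, k, hk⟩
  set K : ℕ := ⌈|k|⌉₊ with hK
  set A : ℕ := ⌈α⁻¹⌉₊ with hA
  have hA1 : 1 ≤ A := by
    rw [hA, Nat.one_le_ceil_iff]
    positivity
  -- bound on preimage ring indices
  have hNle : ∀ {N M : ℕ}, α * N + k ≤ M → N ≤ (M + K) * A := by
    intro N M h
    have hk1 : |k| ≤ (K : ℝ) := Nat.le_ceil _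
    have hk2 : -(K : ℝ) ≤ k := by
      have := neg_abs_le k
      linarith
    have h1 : α * N ≤ (M : ℝ) + K := by linarith
    have h2 : (N : ℝ) ≤ ((M : ℝ) + K) * α⁻¹ := by
      rw [← div_eq_mul_inv, le_div_iff₀ hα]
      nlinarith [h1]
    have hAc : α⁻¹ ≤ (A : ℝ) := Nat.le_ceil _
    have h3 : (N : ℝ) ≤ ((M : ℝ) + K) * A := by
      have hMK : (0 : ℝ) ≤ (M : ℝ) + K := by positivity
      calc (N : ℝ) ≤ ((M : ℝ) + K) * α⁻¹ := h2
        _ ≤ ((M : ℝ) + K) * A := by gcongr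
    exact_mod_cast h3
  -- counting bound
  have key : ∀ M : ℕ, Fintype.card (Y M) ≤
      ∑ n ∈ Finset.range ((M + K) * A + 1), Fintype.card (X n) := by
    intro M
    have hchoice : ∀ y : Y M, ∃ p : Σ n : Fin ((M + K) * A + 1), X n.1,
        β (some ⟨p.1.1, p.2⟩) = some ⟨M, y⟩ := by
      intro y
      obtain ⟨x, hxeq⟩ := hsurj (some ⟨M, y⟩)
      match x, hxeq with
      | none, hxeq => rw [hβ0] at hxeq; exact absurd hxeq (by simp)
      | some ⟨N, xx⟩, hxeq =>
        have hN : N ≤ (M + K) * A := hNle (hk N xx M y hxeq)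
        exact ⟨⟨⟨N, Nat.lt_succ_of_le hN⟩, xx⟩, hxeq⟩
    choose g hg using hchoice
    have hinj : Function.Injective g := by
      intro y1 y2 h
      have h2 : some (⟨M, y1⟩ : Σ n, Y n) = some ⟨M, y2⟩ := by
        rw [← hg y1, h, hg y2]
      simpa using h2
    calc Fintype.card (Y M) ≤ Fintype.card (Σ n : Fin ((M + K) * A + 1), X n.1) :=
          Fintype.card_le_of_injective g hinj
      _ = ∑ n : Fin ((M + K) * A + 1), Fintype.card (X n.1) := by
          rw [Fintype.card_sigma]
      _ = ∑ n ∈ Finset.range ((M + K) * A + 1), Fintype.card (X n) := by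
          exact Fin.sum_univ_eq_sum_range (fun n => Fintype.card (X n)) _
  -- choose large M
  set C : ℕ := ∑ n ∈ Finset.range n₀, Fintype.card (X n) with hC
  set a : ℕ := C + x₀ * (K * A + 1) with ha
  set b : ℕ := x₀ * A with hb
  set M : ℕ := max n₀ (3 * (a + b) + 3) with hM
  have hMn₀ : n₀ ≤ M := le_max_left _ _
  have hMbig : 3 * (a + b) + 3 ≤ M := le_max_right _ _
  set B : ℕ := (M + K) * A with hB
  have hn₀B : n₀ ≤ B + 1 := by
    have : M ≤ M * A := Nat.le_mul_of_pos_right M hA1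
    have : M * A ≤ (M + K) * A := Nat.mul_le_mul_right A (Nat.le_add_right _ _)
    omega
  -- sum bound
  have hsum : ∑ n ∈ Finset.range (B + 1), Fintype.card (X n) ≤ C + x₀ * (B + 1) := by
    rw [Finset.range_eq_Ico, ← Finset.sum_Ico_consecutive _ (Nat.zero_le n₀) hn₀B]
    have h2 : ∑ n ∈ Finset.Ico n₀ (B + 1), Fintype.card (X n)
        = ∑ n ∈ Finset.Ico n₀ (B + 1), x₀ := by
      apply Finset.sum_congr rfl
      intro n hn
      exact hx n (Finset.mem_Ico.mp hn).1
    have hfirst : ∑ n ∈ Finset.Ico 0 n₀, Fintype.card (X n) = C := by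
      rw [hC, Finset.range_eq_Ico]
    rw [hfirst, h2, Finset.sum_const, smul_eq_mul, Nat.card_Ico]
    have : (B + 1 - n₀) * x₀ ≤ x₀ * (B + 1) := by
      calc (B + 1 - n₀) * x₀ ≤ (B + 1) * x₀ := Nat.mul_le_mul_right _ (by omega)
        _ = x₀ * (B + 1) := Nat.mul_comm _ _
    omega
  -- final contradiction
  have hcard : Fintype.card (Y M) = y₀ * r ^ M := hy M hMn₀
  have h1 : y₀ * r ^ M ≤ C + x₀ * (B + 1) := by
    rw [← hcard]
    exact (key M).trans hsum
  have h2 : C + x₀ * (B + 1) = a + b * M := by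
    rw [ha, hb, hB]; ring
  have h3 : a + b * M ≤ (a + b) * (M + 1) := by nlinarith [Nat.zero_le a, Nat.zero_le b]
  have h4 : (a + b) * (M + 1) < 2 ^ M := lin_lt_pow (a + b) M hMbig
  have h5 : 2 ^ M ≤ y₀ * r ^ M := by
    calc 2 ^ M ≤ r ^ M := Nat.pow_le_pow_left hr M
      _ ≤ y₀ * r ^ M := Nat.le_mul_of_pos_left _ hy₀
  omega
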